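/- Let g(x) ∈ 𝔽_q[x] be monic irreducible of degree r with g(0) ≠ 0 and let l ≥ 1. Then the multiplicative order of the class of x in the unit group M_{g^l} of 𝔽_q[x]/(g(x)^l) equals ord(g(x)) · p^{⌈log_p l⌉}, where ord(g) is the least e ≥ 1 with g(x) dividing x^e − 1 and ⌈log_p l⌉ is the least m ∈ ℕ with p^m ≥ l. -/

import Mathlib

open Polynomial

/-- The multiplicative order of the class of `x` in the unit group of
`𝔽_q[x]/(g(x)^l)` (`g` monic irreducible with `g(0) ≠ 0`) equals
`ord(g) · p^{⌈log_p l⌉}`, where `ord(g)` is the least `e ≥ 1` with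
`g(x) ∣ x^e - 1` and `⌈log_p l⌉` is the least `m` with `p^m ≥ l`. -/
theorem stmt_17
    (p δ : ℕ) (hp : p.Prime) (hδ : 1 ≤ δ)
    (F : Type) [Field F] [Fintype F] [CharP F p] (hcard : Fintype.card F = p ^ δ)
    (r l : ℕ) (g : Polynomial F)
    (hmonic : g.Monic) (hirr : Irreducible g) (hdeg : g.natDegree = r)
    (hg0 : g.coeff 0 ≠ 0) (hl : 1 ≤ l) :
    orderOf (Ideal.Quotient.mk (Ideal.span {g ^ l}) X)
      = sInf {e : ℕ | 1 ≤ e ∧ g ∣ X ^ e - 1} * p ^ sInf {m : ℕ | l ≤ p ^ m} := by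
  classical
  have hFact : Fact p.Prime := ⟨hp⟩
  have hg0' : g ≠ 0 := hmonic.ne_zero
  have hgprime : Prime g := hirr.prime
  -- g does not divide X
  have hgX : ¬ g ∣ X := by
    rintro ⟨c, hc⟩
    have hc0 : c ≠ 0 := by
      rintro rfl
      simp at hc
    have hdegs : 1 = g.natDegree + c.natDegree := by
      rw [← natDegree_X (R := F), hc, natDegree_mul hg0' hc0]
    have hgpos : 0 < g.natDegree := hirr.natDegree_pos
    have hcdeg : c.natDegree = 0 := by omega
    have hcoeff : (0 : F) = g.coeff 0 * c.coeff 0 := by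
      have := congrArg (fun q : F[X] => q.coeff 0) hc
      simpa [mul_coeff_zero] using this
    have hcc : c.coeff 0 ≠ 0 := by
      intro h
      apply hc0
      rw [eq_C_of_natDegree_eq_zero hcdeg, h, map_zero]
    rcases mul_eq_zero.mp hcoeff.symm with h | h
    · exact hg0 h
    · exact hcc h
  -- the field K = F[X]/(g)
  have hFactIrr : Fact (Irreducible g) := ⟨hirr⟩
  set K := AdjoinRoot g
  set x : K := AdjoinRoot.root g with hxdef
  have key : ∀ n : ℕ, x ^ n = 1 ↔ g ∣ X ^ n - 1 := by
    intro n
    rw [← sub_eq_zero]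
    have hmk : x ^ n - 1 = AdjoinRoot.mk g (X ^ n - 1) := by
      rw [map_sub, map_pow, AdjoinRoot.mk_X, map_one]
    rw [hmk, AdjoinRoot.mk_eq_zero]
  have hKchar : CharP K p := charP_of_injective_algebraMap (algebraMap F K).injective p
  -- K is finite
  have hKfin : Finite K := by
    have : Module.Finite F K := (AdjoinRoot.powerBasis hg0').finite
    exact Module.finite_of_finite F
  have hxne : x ≠ 0 := by
    rw [hxdef, ← AdjoinRoot.mk_X, Ne, AdjoinRoot.mk_eq_zero]
    exact hgX
  -- x has finite order
  have hxfin : IsOfFinOrder x := by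
    lift x to Kˣ using hxne.isUnit with u hu
    rw [← orderOf_pos_iff, orderOf_units]
    exact orderOf_pos u
  set S := {e : ℕ | 1 ≤ e ∧ g ∣ X ^ e - 1} with hS
  have hSne : S.Nonempty := by
    refine ⟨orderOf x, hxfin.orderOf_pos, (key _).mp (pow_orderOf_eq_one x)⟩
  set e := sInf S with he
  have heS : e ∈ S := Nat.sInf_mem hSne
  have he1 : 1 ≤ e := heS.1
  have hxe : x ^ e = 1 := (key e).mpr heS.2
  -- e equals the order of x
  have heord : e = orderOf x := by
    have h1 : orderOf x ≤ e := orderOf_le_of_pow_eq_one he1 hxe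
    have h2 : e ≤ orderOf x :=
      Nat.sInf_le ⟨hxfin.orderOf_pos, (key _).mp (pow_orderOf_eq_one x)⟩
    omega
  have hedvd : ∀ k : ℕ, x ^ k = 1 → e ∣ k := by
    intro k hk
    rw [heord]
    exact orderOf_dvd_of_pow_eq_one hk
  -- p does not divide e
  have hpe : ¬ p ∣ e := by
    rintro ⟨e', hee'⟩
    have he'1 : 1 ≤ e' := by
      rcases Nat.eq_zero_or_pos e' with h | h
      · rw [h, mul_zero] at hee'; omega
      · exact h
    have hxE : (x ^ e') ^ p = 1 ^ p := by
      rw [← pow_mul, mul_comm, ← hee', one_pow]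
      exact hxe
    have hxe' : x ^ e' = 1 := by
      have := frobenius_inj K p
      have h2 : frobenius K p (x ^ e') = frobenius K p 1 := by
        simpa [frobenius_def] using hxE
      exact this h2
    have hle : e ≤ e' := Nat.sInf_le ⟨he'1, (key e').mp hxe'⟩
    have hp2 : 2 ≤ p := hp.two_le
    nlinarith
  -- the set T and m
  set T := {m : ℕ | l ≤ p ^ m} with hT
  have hTne : T.Nonempty := by
    have hlt : l < p ^ l := calc
      l < 2 ^ l := Nat.lt_two_pow_self
      _ ≤ p ^ l := Nat.pow_le_pow_left hp.two_le l
    exact ⟨l, le_of_lt hlt⟩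
  set m := sInf T with hm
  have hlm : l ≤ p ^ m := Nat.sInf_mem hTne
  -- the quotient ring
  have key2 : ∀ n : ℕ, (Ideal.Quotient.mk (Ideal.span {g ^ l}) X) ^ n = 1 ↔
      g ^ l ∣ X ^ n - 1 := by
    intro n
    rw [← map_pow, ← map_one (Ideal.Quotient.mk (Ideal.span {g ^ l})),
      Ideal.Quotient.mk_eq_mk_iff_sub_mem, Ideal.mem_span_singleton]
  have charPoly : CharP F[X] p := by infer_instance
  have hfreshman : ∀ n : ℕ, ∀ c : ℕ, ((X : F[X]) ^ n - 1) ^ p ^ c = X ^ (n * p ^ c) - 1 := by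
    intro n c
    rw [sub_pow_char_pow, one_pow, ← pow_mul]
  have hpos : 0 < e * p ^ m := Nat.mul_pos he1 (pow_pos hp.pos m)
  rw [orderOf_eq_iff hpos]
  constructor
  · rw [key2]
    have h1 : g ^ l ∣ g ^ p ^ m := pow_dvd_pow g hlm
    have h2 : g ^ p ^ m ∣ ((X : F[X]) ^ e - 1) ^ p ^ m := pow_dvd_pow_of_dvd heS.2 _
    have := h1.trans h2
    rwa [hfreshman e m] at this
  · intro k hklt hkpos hyk
    have hgl : g ^ l ∣ X ^ k - 1 := (key2 k).mp hyk
    have hgk : g ∣ X ^ k - 1 :=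
      (dvd_pow_self g (Nat.one_le_iff_ne_zero.mp hl)).trans hgl
    obtain ⟨t, rfl⟩ := hedvd k ((key k).mpr hgk)
    have ht0 : t ≠ 0 := by rintro rfl; omega
    set a := t.factorization p with ha
    set u := t / p ^ a with hu
    have hta : t = p ^ a * u := (Nat.ordProj_mul_ordCompl_eq_self t p).symm
    have hpu : ¬ p ∣ u := Nat.not_dvd_ordCompl hp ht0
    have hu0 : 0 < u := Nat.ordCompl_pos p ht0
    -- separability / squarefreeness
    have hpeu : ¬ p ∣ e * u := by
      intro h
      rcases hp.dvd_mul.mp h with h | h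
      · exact hpe h
      · exact hpu h
    have hsep : ((X : F[X]) ^ (e * u) - 1).Separable := by
      rw [X_pow_sub_one_separable_iff]
      rw [Ne, CharP.cast_eq_zero_iff F p]
      exact hpeu
    have hsq : Squarefree ((X : F[X]) ^ (e * u) - 1) := hsep.squarefree
    have hgeu : g ∣ (X : F[X]) ^ (e * u) - 1 := by
      refine (key (e * u)).mp ?_
      rw [pow_mul, hxe, one_pow]
    obtain ⟨w, hw⟩ := hgeu
    have hgw : ¬ g ∣ w := by
      rintro ⟨w', rfl⟩
      have : g * g ∣ (X : F[X]) ^ (e * u) - 1 := ⟨w', by rw [hw]; ring⟩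
      exact hirr.not_isUnit (hsq g this)
    -- the factorization of X^(e*t) - 1
    have hfac : (X : F[X]) ^ (e * t) - 1 = (g * w) ^ p ^ a := by
      rw [← hw, hfreshman (e * u) a]
      congr 1
      rw [hta]
      ring
    have hglf : g ^ l ∣ g ^ p ^ a * w ^ p ^ a := by
      rw [← mul_pow, ← hfac]
      exact hgl
    have hla : l ≤ p ^ a := by
      by_contra hcon
      push_neg at hcon
      have h1 : g ^ p ^ a * g ∣ g ^ p ^ a * w ^ p ^ a := by
        refine dvd_trans ?_ hglf
        rw [← pow_succ]
        exact pow_dvd_pow g hcon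
      have h2 : g ∣ w ^ p ^ a :=
        (mul_dvd_mul_iff_left (pow_ne_zero _ hg0')).mp h1
      exact hgw (hgprime.dvd_of_dvd_pow h2)
    have hma : m ≤ a := Nat.sInf_le hla
    have : e * p ^ m ≤ e * t := by
      calc e * p ^ m ≤ e * p ^ a := by
            exact Nat.mul_le_mul_left e (Nat.pow_le_pow_right hp.pos hma)
        _ ≤ e * (p ^ a * u) := by
            have : p ^ a ≤ p ^ a * u := Nat.le_mul_of_pos_right _ hu0
            exact Nat.mul_le_mul_left e this
        _ = e * t := by rw [← hta]
    omega
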